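/- Let U ⊆ ℝⁿ be open and convex, and let φ₀, φ₁ : U → ℝ be twice continuously differentiable with positive definite Hessian matrices at every point. Let W ⊆ ℝⁿ × (0,1) be open, let ξ, η : W → U be continuously differentiable maps satisfying (1−t)·ξ(x,t) + t·η(x,t) = x and ∇φ₀(ξ(x,t)) = ∇φ₁(η(x,t)) for all (x,t) ∈ W, and let u : W → ℝ be twice continuously differentiable with ∇ₓu(x,t) = ∇φ₀(ξ(x,t)) on W. Write H(x,t) = ((1−t)·(D²φ₀(ξ(x,t)))⁻¹ + t·(D²φ₁(η(x,t)))⁻¹)⁻¹. If the full (n+1)×(n+1) Hessian of u in the joint variables (x,t) has determinant zero on W, then ∂²ₜₜu(x,t) = ⟨ξ(x,t) − η(x,t), H(x,t)·(ξ(x,t) − η(x,t))⟩ for all (x,t) ∈ W. -/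

import Mathlib

open scoped Matrix

/-- The gradient of `φ : ℝⁿ → ℝ` at `x`, as the vector of partial derivatives. -/
noncomputable def grad {n : ℕ} (φ : (Fin n → ℝ) → ℝ) (x : Fin n → ℝ) : Fin n → ℝ :=
  fun i => fderiv ℝ φ x (Pi.single i 1)

/-- The Jacobian matrix of a map `g : ℝⁿ → ℝⁿ` at `x`. -/
noncomputable def jacobianMatrix {n : ℕ} (g : (Fin n → ℝ) → Fin n → ℝ)
    (x : Fin n → ℝ) : Matrix (Fin n) (Fin n) ℝ :=
  Matrix.of fun i j => fderiv ℝ g x (Pi.single j 1) i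

/-- The Hessian matrix of `φ : ℝⁿ → ℝ` at `x`. -/
noncomputable def hess {n : ℕ} (φ : (Fin n → ℝ) → ℝ) (x : Fin n → ℝ) :
    Matrix (Fin n) (Fin n) ℝ :=
  jacobianMatrix (grad φ) x

/-- The coordinate directions of `ℝⁿ × ℝ`, indexed by `Fin n ⊕ Unit`. -/
def dirvec (n : ℕ) : Fin n ⊕ Unit → (Fin n → ℝ) × ℝ
  | Sum.inl i => (Pi.single i 1, 0)
  | Sum.inr _ => (0, 1)

/-- The full `(n+1)×(n+1)` Hessian of `u : ℝⁿ × ℝ → ℝ` in the joint variables `(x,t)`. -/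
noncomputable def fullHess {n : ℕ} (u : (Fin n → ℝ) × ℝ → ℝ)
    (p : (Fin n → ℝ) × ℝ) : Matrix (Fin n ⊕ Unit) (Fin n ⊕ Unit) ℝ :=
  Matrix.of fun a b => fderiv ℝ (fun q => fderiv ℝ u q (dirvec n b)) p (dirvec n a)

/- ### Auxiliary lemmas -/

lemma fderiv_apply_eq_mulVec {n : ℕ} (F : (Fin n → ℝ) → (Fin n → ℝ)) (a z : Fin n → ℝ) :
    fderiv ℝ F a z = (jacobianMatrix F a).mulVec z := by
  funext i
  have hz : z = ∑ j, z j • (Pi.single j (1:ℝ) : Fin n → ℝ) := by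
    ext k; simp [Pi.single_apply, Finset.sum_apply]
  conv_lhs => rw [hz, map_sum]
  simp only [_root_.map_smul, Finset.sum_apply, Pi.smul_apply, smul_eq_mul, jacobianMatrix,
    Matrix.mulVec, dotProduct, Matrix.of_apply]
  exact Finset.sum_congr rfl fun j _ => mul_comm _ _

lemma fderiv_comp_proj {E : Type*} [NormedAddCommGroup E] [NormedSpace ℝ E] {n : ℕ}
    {F : E → Fin n → ℝ} {p : E} (hF : DifferentiableAt ℝ F p) (j : Fin n) (w : E) :
    fderiv ℝ (fun q => F q j) p w = fderiv ℝ F p w j := by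
  have h : (fun q => F q j) = (ContinuousLinearMap.proj j : ((Fin n → ℝ)) →L[ℝ] ℝ) ∘ F := rfl
  rw [h, fderiv_comp p (ContinuousLinearMap.proj j).differentiableAt hF]
  simp

noncomputable def gradCLM (n : ℕ) : ((Fin n → ℝ) →L[ℝ] ℝ) →L[ℝ] (Fin n → ℝ) :=
  ContinuousLinearMap.pi fun i => ContinuousLinearMap.apply ℝ ℝ (Pi.single i 1)

lemma grad_eq_comp {n : ℕ} (φ : (Fin n → ℝ) → ℝ) :
    grad φ = (gradCLM n) ∘ (fderiv ℝ φ) := rfl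

lemma grad_differentiableAt {n : ℕ} {φ : (Fin n → ℝ) → ℝ} {U : Set (Fin n → ℝ)}
    (hUo : IsOpen U) (hφ : ContDiffOn ℝ 2 φ U) {a : Fin n → ℝ} (ha : a ∈ U) :
    DifferentiableAt ℝ (grad φ) a := by
  have h2 : ContDiffOn ℝ (1 + 1) φ U := by norm_num [hφ]
  have h1 : ContDiffOn ℝ 1 (fderiv ℝ φ) U :=
    ((contDiffOn_succ_iff_fderiv_of_isOpen hUo).1 h2).2.2
  have hd : DifferentiableAt ℝ (fderiv ℝ φ) a :=
    (h1.differentiableOn one_ne_zero).differentiableAt (hUo.mem_nhds ha)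
  rw [grad_eq_comp]
  exact (gradCLM n).differentiableAt.comp a hd

lemma key_chain {n : ℕ} {φ : (Fin n → ℝ) → ℝ} {U : Set (Fin n → ℝ)}
    (hUo : IsOpen U) (hφ : ContDiffOn ℝ 2 φ U)
    {ξ : (Fin n → ℝ) × ℝ → Fin n → ℝ} {p : (Fin n → ℝ) × ℝ}
    (hξa : DifferentiableAt ℝ ξ p) (haU : ξ p ∈ U) (w : (Fin n → ℝ) × ℝ) :
    fderiv ℝ (fun q => grad φ (ξ q)) p w = (hess φ (ξ p)).mulVec (fderiv ℝ ξ p w) := by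
  have hga : DifferentiableAt ℝ (grad φ) (ξ p) := grad_differentiableAt hUo hφ haU
  rw [show (fun q => grad φ (ξ q)) = (grad φ) ∘ ξ from rfl, fderiv_comp p hga hξa]
  simp only [ContinuousLinearMap.comp_apply]
  exact fderiv_apply_eq_mulVec _ _ _

lemma posDef_smul' {n : ℕ} {M : Matrix (Fin n) (Fin n) ℝ} (hM : M.PosDef) {c : ℝ} (hc : 0 < c) :
    (c • M).PosDef := by
  refine ⟨?_, fun x hx => ?_⟩
  · show (c • M)ᴴ = c • M
    rw [Matrix.conjTranspose_smul, star_trivial, hM.1.eq]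
  · exact (hM.smul hc).2 hx

lemma row_mul_mul_col {n : ℕ} (v w : Fin n → ℝ) (N : Matrix (Fin n) (Fin n) ℝ) :
    ((Matrix.of fun (_ : Unit) j => v j) * N * (Matrix.of fun i (_ : Unit) => w i)) () ()
      = v ⬝ᵥ (N.mulVec w) := by
  simp [Matrix.mul_apply, Matrix.mulVec, dotProduct, Finset.sum_mul, Finset.mul_sum,
    mul_assoc]
  rw [Finset.sum_comm]

set_option maxHeartbeats 1000000 in
/-- Corollary 3.5 of the paper: if the full Hessian of `u` is degenerate
(`det D²_{(x,t)}u = 0`) and the spatial gradient of `u` is `∇φ₀(ξ(x,t))`, then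
`∂²ₜₜu = ⟨ξ - η, H (ξ - η)⟩` with `H = ((1-t)(D²φ₀(ξ))⁻¹ + t(D²φ₁(η))⁻¹)⁻¹`. -/
theorem stmt8 (n : ℕ) (U : Set (Fin n → ℝ)) (hUo : IsOpen U) (hUc : Convex ℝ U)
    (φ₀ φ₁ : (Fin n → ℝ) → ℝ)
    (hφ₀ : ContDiffOn ℝ 2 φ₀ U) (hφ₁ : ContDiffOn ℝ 2 φ₁ U)
    (hH₀ : ∀ x ∈ U, (hess φ₀ x).PosDef) (hH₁ : ∀ x ∈ U, (hess φ₁ x).PosDef)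
    (W : Set ((Fin n → ℝ) × ℝ)) (hWo : IsOpen W)
    (hWt : ∀ p ∈ W, p.2 ∈ Set.Ioo (0 : ℝ) 1)
    (ξ η : (Fin n → ℝ) × ℝ → Fin n → ℝ)
    (hξU : ∀ p ∈ W, ξ p ∈ U) (hηU : ∀ p ∈ W, η p ∈ U)
    (hξd : ContDiffOn ℝ 1 ξ W) (hηd : ContDiffOn ℝ 1 η W)
    (hseg : ∀ p ∈ W, (1 - p.2) • ξ p + p.2 • η p = p.1)
    (hgradmatch : ∀ p ∈ W, grad φ₀ (ξ p) = grad φ₁ (η p))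
    (u : (Fin n → ℝ) × ℝ → ℝ) (hu : ContDiffOn ℝ 2 u W)
    (hspace : ∀ p ∈ W, grad (fun y => u (y, p.2)) p.1 = grad φ₀ (ξ p))
    (hdeg : ∀ p ∈ W, (fullHess u p).det = 0) :
    ∀ p ∈ W,
      fullHess u p (Sum.inr ()) (Sum.inr ()) =
        (ξ p - η p) ⬝ᵥ
          ((((1 - p.2) • (hess φ₀ (ξ p))⁻¹ + p.2 • (hess φ₁ (η p))⁻¹)⁻¹).mulVec
            (ξ p - η p)) := by
  intro p hp
  obtain ⟨ht0, ht1⟩ := hWt p hp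
  set t := p.2 with htdef
  set a := ξ p with hadef
  set b := η p with hbdef
  set A := hess φ₀ a with hAdef
  set B := hess φ₁ b with hBdef
  set Ci := (1 - t) • A⁻¹ + t • B⁻¹ with hCidef
  set H := Ci⁻¹ with hHdef
  set z : Fin n → ℝ := a - b with hzdef
  have haU := hξU p hp
  have hbU := hηU p hp
  have hA : A.PosDef := hH₀ _ haU
  have hB : B.PosDef := hH₁ _ hbU
  have hAdet : IsUnit A.det := isUnit_iff_ne_zero.2 hA.det_pos.ne'
  have hBdet : IsUnit B.det := isUnit_iff_ne_zero.2 hB.det_pos.ne'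
  have hCi : Ci.PosDef := (posDef_smul' hA.inv (by linarith)).add (posDef_smul' hB.inv ht0)
  have hCidet : IsUnit Ci.det := isUnit_iff_ne_zero.2 hCi.det_pos.ne'
  have hH : H.PosDef := hCi.inv
  have hHdet : IsUnit H.det := isUnit_iff_ne_zero.2 hH.det_pos.ne'
  have hHsymmE : ∀ i j, H j i = H i j := by
    intro i j
    have h := hH.1.eq
    rw [Matrix.conjTranspose_eq_transpose_of_trivial] at h
    exact (congrFun (congrFun h i) j : Hᵀ i j = H i j)
  -- differentiability facts
  have hWnp : W ∈ nhds p := hWo.mem_nhds hp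
  have hu2 : ContDiffAt ℝ 2 u p := hu.contDiffAt hWnp
  have hξa : DifferentiableAt ℝ ξ p := (hξd.contDiffAt hWnp).differentiableAt one_ne_zero
  have hηa : DifferentiableAt ℝ η p := (hηd.contDiffAt hWnp).differentiableAt one_ne_zero
  have hfdu : ∀ q ∈ W, DifferentiableAt ℝ (fderiv ℝ u) q := by
    have h2 : ContDiffOn ℝ (1 + 1) u W := by norm_num [hu]
    have h1 : ContDiffOn ℝ 1 (fderiv ℝ u) W :=
      ((contDiffOn_succ_iff_fderiv_of_isOpen hWo).1 h2).2.2
    exact fun q hq => (h1.differentiableOn one_ne_zero).differentiableAt (hWo.mem_nhds hq)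
  have hsymm : IsSymmSndFDerivAt ℝ u p := hu2.isSymmSndFDerivAt (by simp)
  -- second derivative as a bilinear object
  have hT : ∀ (w d : (Fin n → ℝ) × ℝ), fderiv ℝ (fun q => fderiv ℝ u q d) p w
      = fderiv ℝ (fderiv ℝ u) p w d := by
    intro w d
    rw [fderiv_clm_apply (hfdu p hp) (differentiableAt_const d)]
    simp
  -- spatial gradient along W
  have hsp : ∀ q ∈ W, ∀ j : Fin n,
      fderiv ℝ u q ((Pi.single j 1 : Fin n → ℝ), (0:ℝ)) = grad φ₀ (ξ q) j := by
    intro q hq j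
    have hdq : DifferentiableAt ℝ u q :=
      (hu.contDiffAt (hWo.mem_nhds hq)).differentiableAt (by norm_num)
    have hemb : HasFDerivAt (fun y : Fin n → ℝ => (y, q.2))
        ((ContinuousLinearMap.id ℝ (Fin n → ℝ)).prod 0) q.1 :=
      HasFDerivAt.prodMk (hasFDerivAt_id q.1) (hasFDerivAt_const q.2 q.1)
    have hcomp : HasFDerivAt (fun y => u (y, q.2))
        ((fderiv ℝ u q).comp ((ContinuousLinearMap.id ℝ (Fin n → ℝ)).prod 0)) q.1 :=
      hdq.hasFDerivAt.comp q.1 hemb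
    have h1 : grad (fun y => u (y, q.2)) q.1 j
        = fderiv ℝ u q ((Pi.single j 1 : Fin n → ℝ), (0:ℝ)) := by
      show fderiv ℝ (fun y => u (y, q.2)) q.1 (Pi.single j 1) = _
      rw [hcomp.fderiv]
      rfl
    rw [← h1, hspace q hq]
  -- mixed second derivatives in terms of A and Dξ
  have hTspace : ∀ (w : (Fin n → ℝ) × ℝ) (j : Fin n),
      fderiv ℝ (fderiv ℝ u) p w ((Pi.single j 1 : Fin n → ℝ), (0:ℝ))
        = (A.mulVec (fderiv ℝ ξ p w)) j := by
    intro w j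
    rw [← hT w ((Pi.single j 1 : Fin n → ℝ), (0:ℝ))]
    have heq : (fun q => fderiv ℝ u q ((Pi.single j 1 : Fin n → ℝ), (0:ℝ)))
        =ᶠ[nhds p] (fun q => grad φ₀ (ξ q) j) := by
      filter_upwards [hWnp] with q hq using hsp q hq j
    rw [heq.fderiv_eq]
    have hgc : DifferentiableAt ℝ (fun q => grad φ₀ (ξ q)) p :=
      (grad_differentiableAt hUo hφ₀ haU).comp p hξa
    rw [fderiv_comp_proj hgc j w, key_chain hUo hφ₀ hξa haU w]
  -- derivative of the segment identity
  have hLξη : ∀ w : (Fin n → ℝ) × ℝ,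
      (1 - t) • fderiv ℝ ξ p w + t • fderiv ℝ η p w = w.1 + w.2 • (a - b) := by
    have hc1 : HasFDerivAt (fun q : (Fin n → ℝ) × ℝ => 1 - q.2)
        ((0 : ((Fin n → ℝ) × ℝ) →L[ℝ] ℝ) - ContinuousLinearMap.snd ℝ (Fin n → ℝ) ℝ) p :=
      (hasFDerivAt_const (1:ℝ) p).sub (hasFDerivAt_snd)
    have hc2 : HasFDerivAt (fun q : (Fin n → ℝ) × ℝ => q.2)
        (ContinuousLinearMap.snd ℝ (Fin n → ℝ) ℝ) p := hasFDerivAt_snd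
    have hfa := hc1.smul hξa.hasFDerivAt
    have hfb := hc2.smul hηa.hasFDerivAt
    have hsum := hfa.add hfb
    have heqev : (fun q : (Fin n → ℝ) × ℝ => (1 - q.2) • ξ q + q.2 • η q)
        =ᶠ[nhds p] (fun q => q.1) := by
      filter_upwards [hWnp] with q hq using hseg q hq
    have hfst : HasFDerivAt (fun q : (Fin n → ℝ) × ℝ => q.1)
        (ContinuousLinearMap.fst ℝ (Fin n → ℝ) ℝ) p := hasFDerivAt_fst
    have hD := (hsum.congr_of_eventuallyEq heqev.symm).unique hfst
    intro w
    have hw := congrArg (fun (L : ((Fin n → ℝ) × ℝ) →L[ℝ] (Fin n → ℝ)) => L w) hD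
    simp only [ContinuousLinearMap.add_apply, ContinuousLinearMap.smul_apply,
      ContinuousLinearMap.smulRight_apply, ContinuousLinearMap.sub_apply,
      ContinuousLinearMap.zero_apply, ContinuousLinearMap.coe_snd',
      ContinuousLinearMap.coe_fst'] at hw
    have := hw
    rw [← htdef, ← hadef, ← hbdef] at this
    -- this : (1 - t) • fderiv ξ p w + (0 - w.2) • a + (t • fderiv η p w + w.2 • b) = w.1
    rw [smul_sub]
    linear_combination (norm := module) this
  -- derivative of the gradient matching identity
  have hmatch : ∀ w : (Fin n → ℝ) × ℝ,
      A.mulVec (fderiv ℝ ξ p w) = B.mulVec (fderiv ℝ η p w) := by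
    intro w
    have heq : (fun q => grad φ₀ (ξ q)) =ᶠ[nhds p] (fun q => grad φ₁ (η q)) := by
      filter_upwards [hWnp] with q hq using hgradmatch q hq
    calc A.mulVec (fderiv ℝ ξ p w) = fderiv ℝ (fun q => grad φ₀ (ξ q)) p w :=
          (key_chain hUo hφ₀ hξa haU w).symm
      _ = fderiv ℝ (fun q => grad φ₁ (η q)) p w := by rw [heq.fderiv_eq]
      _ = B.mulVec (fderiv ℝ η p w) := key_chain hUo hφ₁ hηa hbU w
  -- the central algebraic identity
  have hkey : ∀ w : (Fin n → ℝ) × ℝ,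
      A.mulVec (fderiv ℝ ξ p w) = H.mulVec (w.1 + w.2 • (a - b)) := by
    intro w
    set v := A.mulVec (fderiv ℝ ξ p w) with hv
    have hs : fderiv ℝ ξ p w = A⁻¹.mulVec v := by
      rw [hv, Matrix.mulVec_mulVec, Matrix.nonsing_inv_mul _ hAdet, Matrix.one_mulVec]
    have hr : fderiv ℝ η p w = B⁻¹.mulVec v := by
      rw [hv, hmatch w, Matrix.mulVec_mulVec, Matrix.nonsing_inv_mul _ hBdet,
        Matrix.one_mulVec]
    have hCv : Ci.mulVec v = w.1 + w.2 • (a - b) := by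
      rw [hCidef, Matrix.add_mulVec, Matrix.smul_mulVec, Matrix.smul_mulVec,
        ← hs, ← hr]
      exact hLξη w
    calc v = (1 : Matrix (Fin n) (Fin n) ℝ).mulVec v := (Matrix.one_mulVec v).symm
      _ = (Ci⁻¹ * Ci).mulVec v := by rw [Matrix.nonsing_inv_mul _ hCidet]
      _ = H.mulVec (Ci.mulVec v) := by rw [← Matrix.mulVec_mulVec, hHdef]
      _ = H.mulVec (w.1 + w.2 • (a - b)) := by rw [hCv]
  -- entries of the full Hessian
  have hM11 : ∀ i j, fullHess u p (Sum.inl i) (Sum.inl j) = H i j := by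
    intro i j
    show fderiv ℝ (fun q => fderiv ℝ u q (dirvec n (Sum.inl j))) p (dirvec n (Sum.inl i)) = _
    rw [show dirvec n (Sum.inl j) = ((Pi.single j 1 : Fin n → ℝ), (0:ℝ)) from rfl,
      hT (dirvec n (Sum.inl i)) _, hTspace (dirvec n (Sum.inl i)) j,
      hkey (dirvec n (Sum.inl i))]
    show (H.mulVec ((Pi.single i 1 : Fin n → ℝ) + (0:ℝ) • (a - b))) j = H i j
    rw [zero_smul, add_zero, Matrix.mulVec_single]
    simpa using hHsymmE i j
  have hM21 : ∀ j, fullHess u p (Sum.inr ()) (Sum.inl j) = (H.mulVec z) j := by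
    intro j
    show fderiv ℝ (fun q => fderiv ℝ u q (dirvec n (Sum.inl j))) p (dirvec n (Sum.inr ())) = _
    rw [show dirvec n (Sum.inl j) = ((Pi.single j 1 : Fin n → ℝ), (0:ℝ)) from rfl,
      hT (dirvec n (Sum.inr ())) _, hTspace (dirvec n (Sum.inr ())) j,
      hkey (dirvec n (Sum.inr ()))]
    show (H.mulVec ((0 : Fin n → ℝ) + (1:ℝ) • (a - b))) j = _
    rw [one_smul, zero_add, hzdef]
  have hM12 : ∀ i, fullHess u p (Sum.inl i) (Sum.inr ()) = (H.mulVec z) i := by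
    intro i
    show fderiv ℝ (fun q => fderiv ℝ u q (dirvec n (Sum.inr ()))) p (dirvec n (Sum.inl i)) = _
    rw [hT (dirvec n (Sum.inl i)) _, hsymm (dirvec n (Sum.inl i)) (dirvec n (Sum.inr ())),
      show dirvec n (Sum.inl i) = ((Pi.single i 1 : Fin n → ℝ), (0:ℝ)) from rfl,
      hTspace (dirvec n (Sum.inr ())) i, hkey (dirvec n (Sum.inr ()))]
    show (H.mulVec ((0 : Fin n → ℝ) + (1:ℝ) • (a - b))) i = _
    rw [one_smul, zero_add, hzdef]
  -- block decomposition and Schur complement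
  haveI : Invertible H := H.invertibleOfIsUnitDet hHdet
  set c := fullHess u p (Sum.inr ()) (Sum.inr ()) with hcdef
  have hblocks : fullHess u p = Matrix.fromBlocks H
      (Matrix.of fun i (_ : Unit) => (H.mulVec z) i)
      (Matrix.of fun (_ : Unit) j => (H.mulVec z) j)
      (Matrix.of fun (_ : Unit) (_ : Unit) => c) := by
    ext i j
    cases i with
    | inl i =>
      cases j with
      | inl j => simpa using hM11 i j
      | inr j => simpa using hM12 i
    | inr i =>
      cases j with
      | inl j => simpa using hM21 j
      | inr j => simp [hcdef]
  have hdet := hdeg p hp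
  rw [hblocks, Matrix.det_fromBlocks₁₁] at hdet
  have hdet2 : ((Matrix.of fun (_ : Unit) (_ : Unit) => c) -
      (Matrix.of fun (_ : Unit) j => (H.mulVec z) j) * H⁻¹ *
        (Matrix.of fun i (_ : Unit) => (H.mulVec z) i)).det = 0 := by
    rcases mul_eq_zero.1 hdet with h | h
    · exact absurd h hHdet.ne_zero
    · rw [Matrix.invOf_eq_nonsing_inv] at h
      exact h
  rw [Matrix.det_unique] at hdet2
  have hinvHz : H⁻¹.mulVec (H.mulVec z) = z := by
    rw [Matrix.mulVec_mulVec, Matrix.nonsing_inv_mul _ hHdet, Matrix.one_mulVec]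
  have hentry : ((Matrix.of fun (_ : Unit) j => (H.mulVec z) j) * H⁻¹ *
      (Matrix.of fun i (_ : Unit) => (H.mulVec z) i)) () ()
        = (H.mulVec z) ⬝ᵥ z := by
    rw [row_mul_mul_col, hinvHz]
  have hfin : c = (H.mulVec z) ⬝ᵥ z := by
    have h0 : c - ((Matrix.of fun (_ : Unit) j => (H.mulVec z) j) * H⁻¹ *
        (Matrix.of fun i (_ : Unit) => (H.mulVec z) i)) () () = 0 := hdet2
    rw [hentry] at h0
    linarith
  rw [hfin, dotProduct_comm]
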